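/- Cauchy's q-binomial theorem: for complex numbers a, q, z with |q| < 1 and |z| < 1, the series ∑_{k=0}^∞ ((a;q)_k / (q;q)_k) z^k converges and equals (az;q)_∞ / (z;q)_∞, where (x;q)_∞ = ∏_{j=0}^∞ (1 - x q^j). -/

import Mathlib

/-- Finite q-shifted factorial: (x;q)_n = ∏_{i=0}^{n-1} (1 - x q^i). -/
noncomputable def qp (x q : ℂ) (n : ℕ) : ℂ := ∏ i ∈ Finset.range n, (1 - x * q ^ i)

/-- Infinite q-shifted factorial: (x;q)_∞ = ∏_{j=0}^∞ (1 - x q^j). -/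
noncomputable def qpInf (x q : ℂ) : ℂ := ∏' j : ℕ, (1 - x * q ^ j)

/-- q-shifted factorial with integer index: (x;q)_k = (x;q)_∞ / (x q^k;q)_∞. -/
noncomputable def qpZ (x q : ℂ) (k : ℤ) : ℂ := qpInf x q / qpInf (x * q ^ k) q

open Filter Finset Topology

/-- The coefficients of the q-binomial series. -/
noncomputable def qc (a q : ℂ) (k : ℕ) : ℂ := qp a q k / qp q q k

lemma one_sub_ne_zero {u : ℂ} (h : ‖u‖ < 1) : (1 : ℂ) - u ≠ 0 := by
  intro hu
  rw [sub_eq_zero] at hu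
  rw [← hu] at h
  simp at h

lemma qp_succ (x q : ℂ) (n : ℕ) : qp x q (n + 1) = qp x q n * (1 - x * q ^ n) :=
  Finset.prod_range_succ _ _

lemma abs_q_pow_lt (q : ℂ) (hq : ‖q‖ < 1) (n : ℕ) :
    ‖q * q ^ n‖ < 1 := by
  rw [norm_mul, norm_pow]
  calc ‖q‖ * ‖q‖ ^ n ≤ ‖q‖ * 1 := by
        have := pow_le_one₀ (norm_nonneg q) hq.le (n := n)
        nlinarith [norm_nonneg q]
    _ < 1 := by simpa using hq

lemma qp_q_ne_zero (q : ℂ) (hq : ‖q‖ < 1) (n : ℕ) : qp q q n ≠ 0 := by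
  apply Finset.prod_ne_zero_iff.mpr
  intro i _
  exact one_sub_ne_zero (abs_q_pow_lt q hq i)

lemma qc_rec (a q : ℂ) (hq : ‖q‖ < 1) (k : ℕ) :
    qc a q (k + 1) * (1 - q ^ (k + 1)) = qc a q k * (1 - a * q ^ k) := by
  have h1 := qp_q_ne_zero q hq k
  have h2 := qp_q_ne_zero q hq (k + 1)
  have e2 : qp q q (k + 1) = qp q q k * (1 - q * q ^ k) := qp_succ q q k
  have e1 : qp a q (k + 1) = qp a q k * (1 - a * q ^ k) := qp_succ a q k
  rw [qc, qc, e1, e2, pow_succ]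
  have h3 : (1 : ℂ) - q * q ^ k ≠ 0 := one_sub_ne_zero (abs_q_pow_lt q hq k)
  rw [mul_comm (q ^ k) q, div_mul_eq_mul_div, mul_div_mul_right _ _ h3, mul_div_right_comm]

lemma qc_succ_eq (a q : ℂ) (hq : ‖q‖ < 1) (k : ℕ) :
    qc a q (k + 1) = qc a q k * (1 - a * q ^ k) / (1 - q ^ (k + 1)) := by
  have hne : (1 : ℂ) - q ^ (k + 1) ≠ 0 := by
    apply one_sub_ne_zero
    rw [pow_succ']
    exact abs_q_pow_lt q hq k
  rw [eq_div_iff hne]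
  exact qc_rec a q hq k

lemma qc_summable (a q : ℂ) (hq : ‖q‖ < 1) (w : ℂ) (hw : ‖w‖ < 1) :
    Summable (fun k : ℕ => qc a q k * w ^ k) := by
  set r : ℝ := (1 + ‖w‖) / 2 with hr
  have hr1 : r < 1 := by rw [hr]; linarith
  have hwr : ‖w‖ < r := by rw [hr]; linarith
  apply summable_of_ratio_norm_eventually_le hr1
  -- the ratio tends to |w| < r
  have hpow : Tendsto (fun n : ℕ => q ^ n) atTop (𝓝 0) :=
    tendsto_pow_atTop_nhds_zero_of_norm_lt_one (by simpa using hq)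
  have h1 : Tendsto (fun n : ℕ => ‖1 - a * q ^ n‖) atTop (𝓝 1) := by
    have : Tendsto (fun n : ℕ => (1 : ℂ) - a * q ^ n) atTop (𝓝 1) := by
      simpa using tendsto_const_nhds.sub (tendsto_const_nhds.mul hpow)
    simpa [Function.comp_def] using (continuous_norm.tendsto 1).comp this
  have h2 : Tendsto (fun n : ℕ => ‖1 - q ^ (n + 1)‖) atTop (𝓝 1) := by
    have hp1 : Tendsto (fun n : ℕ => q ^ (n + 1)) atTop (𝓝 0) := by
      have := hpow.comp (tendsto_add_atTop_nat 1)
      simpa [Function.comp_def] using this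
    have : Tendsto (fun n : ℕ => (1 : ℂ) - q ^ (n + 1)) atTop (𝓝 1) := by
      simpa using tendsto_const_nhds.sub hp1
    simpa [Function.comp_def] using (continuous_norm.tendsto 1).comp this
  have hmul : Tendsto (fun n : ℕ => ‖w‖ * ‖1 - a * q ^ n‖) atTop
      (𝓝 (‖w‖ * 1)) := tendsto_const_nhds.mul h1
  have hratio : Tendsto
      (fun n : ℕ => ‖w‖ * ‖1 - a * q ^ n‖ / ‖1 - q ^ (n + 1)‖)
      atTop (𝓝 (‖w‖)) := by
    have := hmul.div h2 one_ne_zero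
    simpa [Pi.div_def] using this
  filter_upwards [hratio.eventually_lt_const hwr] with n hn
  have hne : (1 : ℂ) - q ^ (n + 1) ≠ 0 := by
    apply one_sub_ne_zero; rw [pow_succ']; exact abs_q_pow_lt q hq n
  have key : qc a q (n + 1) * w ^ (n + 1)
      = (qc a q n * w ^ n) * ((1 - a * q ^ n) * w / (1 - q ^ (n + 1))) := by
    rw [qc_succ_eq a q hq n, pow_succ]
    field_simp
    ring
  rw [key, norm_mul]
  have hnorm : ‖(1 - a * q ^ n) * w / (1 - q ^ (n + 1))‖
      = ‖w‖ * ‖1 - a * q ^ n‖ / ‖1 - q ^ (n + 1)‖ := by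
    simp [norm_div, norm_mul]
    ring
  rw [hnorm, mul_comm]
  exact mul_le_mul_of_nonneg_right hn.le (norm_nonneg _)

lemma summable_log_qp (x q : ℂ) (hq : ‖q‖ < 1) :
    Summable (fun n : ℕ => Complex.log (1 - x * q ^ n)) := by
  apply Summable.of_norm_bounded_eventually_nat
    (g := fun n => 3 / 2 * (‖x‖ * ‖q‖ ^ n))
  · exact ((summable_geometric_of_lt_one (norm_nonneg q) hq).mul_left _).mul_left _
  · have hpow : Tendsto (fun n : ℕ => x * q ^ n) atTop (𝓝 0) := by
      simpa using tendsto_const_nhds.mul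
        (tendsto_pow_atTop_nhds_zero_of_norm_lt_one (x := q) (by simpa using hq))
    have hsmall : ∀ᶠ n : ℕ in atTop, ‖x * q ^ n‖ ≤ 1 / 2 := by
      have hn0 : Tendsto (fun n : ℕ => ‖x * q ^ n‖) atTop (𝓝 0) := by
        simpa using hpow.norm
      have := hn0.eventually_lt_const (by norm_num : (0:ℝ) < 1/2)
      exact this.mono fun n hn => hn.le
    filter_upwards [hsmall] with n hn
    have hb := Complex.norm_log_one_add_half_le_self (z := -(x * q ^ n)) (by simpa using hn)
    have : (1 : ℂ) + -(x * q ^ n) = 1 - x * q ^ n := by ring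
    rw [this] at hb
    calc ‖Complex.log (1 - x * q ^ n)‖ ≤ 3 / 2 * ‖-(x * q ^ n)‖ := hb
      _ = 3 / 2 * (‖x‖ * ‖q‖ ^ n) := by
          simp [norm_mul, norm_pow]

lemma hasProd_qpInf (x q : ℂ) (hq : ‖q‖ < 1) :
    HasProd (fun j : ℕ => 1 - x * q ^ j) (qpInf x q) := by
  by_cases hzero : ∃ j : ℕ, (1 : ℂ) - x * q ^ j = 0
  · obtain ⟨j0, hj0⟩ := hzero
    have h0 : HasProd (fun j : ℕ => 1 - x * q ^ j) 0 := by
      have hev : ∀ᶠ s : Finset ℕ in atTop, ∏ i ∈ s, (1 - x * q ^ i) = 0 := by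
        filter_upwards [Filter.eventually_ge_atTop ({j0} : Finset ℕ)] with s hs
        exact Finset.prod_eq_zero (hs (Finset.mem_singleton_self j0)) hj0
      exact Tendsto.congr' (hev.mono fun s h => h.symm) tendsto_const_nhds
    rwa [qpInf, h0.tprod_eq]
  · push_neg at hzero
    have hm : Multipliable (fun j : ℕ => 1 - x * q ^ j) :=
      Complex.multipliable_of_summable_log (summable_log_qp x q hq)
    exact hm.hasProd

lemma tendsto_qp (x q : ℂ) (hq : ‖q‖ < 1) :
    Tendsto (fun n : ℕ => qp x q n) atTop (𝓝 (qpInf x q)) :=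
  (hasProd_qpInf x q hq).tendsto_prod_nat

lemma qpInf_ne_zero (x q : ℂ) (hq : ‖q‖ < 1)
    (hx : ∀ j : ℕ, (1 : ℂ) - x * q ^ j ≠ 0) : qpInf x q ≠ 0 := by
  have h := Complex.cexp_tsum_eq_tprod (f := fun n : ℕ => 1 - x * q ^ n)
    (fun n => hx n) (summable_log_qp x q hq)
  have h2 := h
  rw [qpInf, ← h2]
  exact Complex.exp_ne_zero _

/-- First-step shifted series. -/
noncomputable def shiftU (a q w : ℂ) : ℕ → ℂ
  | 0 => 0
  | (k + 1) => qc a q k * w ^ (k + 1)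

noncomputable def shiftV (a q w : ℂ) : ℕ → ℂ
  | 0 => 0
  | (k + 1) => a * (qc a q k * (q * w) ^ k) * w

lemma funEq (a q : ℂ) (hq : ‖q‖ < 1) (w : ℂ) (hw : ‖w‖ < 1) :
    (1 - w) * (∑' k : ℕ, qc a q k * w ^ k)
      = (1 - a * w) * (∑' k : ℕ, qc a q k * (q * w) ^ k) := by
  have hqw : ‖q * w‖ < 1 := by
    rw [norm_mul]
    calc ‖q‖ * ‖w‖ ≤ 1 * ‖w‖ := by
          nlinarith [norm_nonneg w]
      _ < 1 := by simpa using hw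
  have hS := (qc_summable a q hq w hw).hasSum
  have hT := (qc_summable a q hq (q * w) hqw).hasSum
  set S := ∑' k : ℕ, qc a q k * w ^ k
  set T := ∑' k : ℕ, qc a q k * (q * w) ^ k
  -- shifted sums
  have h2 : HasSum (fun n : ℕ => qc a q n * w ^ (n + 1)) (w * S) := by
    have heq : (fun n : ℕ => qc a q n * w ^ (n + 1))
        = fun n : ℕ => w * (qc a q n * w ^ n) := by
      funext n; ring
    rw [heq]; exact hS.mul_left w
  have hu : HasSum (shiftU a q w) (w * S) := by
    have := (hasSum_nat_add_iff (f := shiftU a q w) 1).mp h2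
    simpa [shiftU] using this
  have h3 : HasSum (fun n : ℕ => a * (qc a q n * (q * w) ^ n) * w) ((a * w) * T) := by
    have heq : (fun n : ℕ => a * (qc a q n * (q * w) ^ n) * w)
        = fun n : ℕ => (a * w) * (qc a q n * (q * w) ^ n) := by
      funext n; ring
    rw [heq]; exact hT.mul_left (a * w)
  have hv : HasSum (shiftV a q w) ((a * w) * T) := by
    have := (hasSum_nat_add_iff (f := shiftV a q w) 1).mp h3
    simpa [shiftV] using this
  have hL : HasSum (fun k : ℕ => qc a q k * w ^ k - shiftU a q w k) (S - w * S) := hS.sub hu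
  have hR : HasSum (fun k : ℕ => qc a q k * (q * w) ^ k - shiftV a q w k) (T - a * w * T) :=
    hT.sub hv
  have hsame : (fun k : ℕ => qc a q k * w ^ k - shiftU a q w k)
      = fun k : ℕ => qc a q k * (q * w) ^ k - shiftV a q w k := by
    funext k
    cases k with
    | zero => simp [shiftU, shiftV]
    | succ k =>
      show qc a q (k + 1) * w ^ (k + 1) - qc a q k * w ^ (k + 1)
        = qc a q (k + 1) * (q * w) ^ (k + 1) - a * (qc a q k * (q * w) ^ k) * w
      have hrec := qc_rec a q hq k
      linear_combination (w ^ (k + 1)) * hrec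
  rw [hsame] at hL
  have := hL.unique hR
  linear_combination this

lemma iterEq (a q z : ℂ) (hq : ‖q‖ < 1) (hz : ‖z‖ < 1) (n : ℕ) :
    qp z q n * (∑' k : ℕ, qc a q k * z ^ k)
      = qp (a * z) q n * (∑' k : ℕ, qc a q k * (q ^ n * z) ^ k) := by
  induction n with
  | zero => simp [qp]
  | succ n ih =>
    have habs : ‖q ^ n * z‖ < 1 := by
      rw [norm_mul, norm_pow]
      calc ‖q‖ ^ n * ‖z‖ ≤ 1 * ‖z‖ := by
            have := pow_le_one₀ (norm_nonneg q) hq.le (n := n)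
            nlinarith [norm_nonneg z]
        _ < 1 := by simpa using hz
    have hfe := funEq a q hq (q ^ n * z) habs
    have hq1 : q * (q ^ n * z) = q ^ (n + 1) * z := by ring
    rw [hq1] at hfe
    rw [qp_succ, qp_succ]
    calc qp z q n * (1 - z * q ^ n) * (∑' k : ℕ, qc a q k * z ^ k)
        = (1 - z * q ^ n) * (qp z q n * (∑' k : ℕ, qc a q k * z ^ k)) := by ring
      _ = (1 - z * q ^ n) * (qp (a * z) q n * (∑' k : ℕ, qc a q k * (q ^ n * z) ^ k)) := by
          rw [ih]
      _ = qp (a * z) q n * ((1 - q ^ n * z) * ∑' k : ℕ, qc a q k * (q ^ n * z) ^ k) := by ring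
      _ = qp (a * z) q n * ((1 - a * (q ^ n * z)) * ∑' k : ℕ, qc a q k * (q ^ (n + 1) * z) ^ k) := by
          rw [hfe]
      _ = qp (a * z) q n * (1 - a * z * q ^ n) * (∑' k : ℕ, qc a q k * (q ^ (n + 1) * z) ^ k) := by
          ring

lemma qc_zero (a q : ℂ) : qc a q 0 = 1 := by simp [qc, qp]

lemma tendsto_tail (a q z : ℂ) (hq : ‖q‖ < 1) (hz : ‖z‖ < 1) :
    Tendsto (fun n : ℕ => ∑' k : ℕ, qc a q k * (q ^ n * z) ^ k) atTop (𝓝 1) := by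
  have habs : ∀ n : ℕ, ‖q ^ n * z‖ < 1 := by
    intro n
    rw [norm_mul, norm_pow]
    calc ‖q‖ ^ n * ‖z‖ ≤ 1 * ‖z‖ := by
          have := pow_le_one₀ (norm_nonneg q) hq.le (n := n)
          nlinarith [norm_nonneg z]
      _ < 1 := by simpa using hz
  -- tail sum bound
  have hsumz : Summable (fun k : ℕ => qc a q k * z ^ k) := qc_summable a q hq z hz
  have hsumz' : Summable (fun k : ℕ => ‖qc a q (k + 1) * z ^ (k + 1)‖) :=
    ((summable_norm_iff.mpr hsumz).comp_injective (add_left_injective 1))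
  set D : ℝ := ∑' k : ℕ, ‖qc a q (k + 1) * z ^ (k + 1)‖ with hD
  have hDnn : 0 ≤ D := tsum_nonneg fun k => norm_nonneg _
  rw [tendsto_iff_norm_sub_tendsto_zero]
  apply squeeze_zero (fun n => norm_nonneg _) (g := fun n => ‖q‖ ^ n * D)
  · intro n
    set w : ℂ := q ^ n * z
    have hsw : Summable (fun k : ℕ => qc a q k * w ^ k) := qc_summable a q hq w (habs n)
    have hsplit : (∑' k : ℕ, qc a q k * w ^ k)
        = qc a q 0 * w ^ 0 + ∑' k : ℕ, qc a q (k + 1) * w ^ (k + 1) :=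
      Summable.tsum_eq_zero_add hsw
    have hzero : qc a q 0 * w ^ 0 = 1 := by rw [qc_zero]; simp
    have hsum_tail : Summable (fun k : ℕ => qc a q (k + 1) * w ^ (k + 1)) :=
      hsw.comp_injective (add_left_injective 1)
    have hterm : ∀ k : ℕ, ‖qc a q (k + 1) * w ^ (k + 1)‖
        ≤ ‖q‖ ^ n * ‖qc a q (k + 1) * z ^ (k + 1)‖ := by
      intro k
      have hw : w ^ (k + 1) = (q ^ n) ^ (k + 1) * z ^ (k + 1) := by
        rw [mul_pow]
      have : ‖qc a q (k + 1) * w ^ (k + 1)‖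
          = (‖q‖ ^ n) ^ (k + 1) * ‖qc a q (k + 1) * z ^ (k + 1)‖ := by
        rw [hw]
        simp only [norm_mul, norm_pow]
        ring
      rw [this]
      apply mul_le_mul_of_nonneg_right _ (norm_nonneg _)
      exact pow_le_of_le_one (pow_nonneg (norm_nonneg q) n)
        (pow_le_one₀ (norm_nonneg q) hq.le) (Nat.succ_ne_zero k)
    calc ‖(∑' k : ℕ, qc a q k * w ^ k) - 1‖
        = ‖∑' k : ℕ, qc a q (k + 1) * w ^ (k + 1)‖ := by
          rw [hsplit, hzero, add_sub_cancel_left]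
      _ ≤ ∑' k : ℕ, ‖qc a q (k + 1) * w ^ (k + 1)‖ :=
          norm_tsum_le_tsum_norm (summable_norm_iff.mpr hsum_tail)
      _ ≤ ∑' k : ℕ, ‖q‖ ^ n * ‖qc a q (k + 1) * z ^ (k + 1)‖ :=
          Summable.tsum_le_tsum hterm (summable_norm_iff.mpr hsum_tail) (hsumz'.mul_left _)
      _ = ‖q‖ ^ n * D := by rw [tsum_mul_left]
  · have : Tendsto (fun n : ℕ => ‖q‖ ^ n) atTop (𝓝 0) :=
      tendsto_pow_atTop_nhds_zero_of_lt_one (norm_nonneg q) hq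
    simpa using this.mul_const D

/-- Cauchy's q-binomial theorem. -/
theorem cauchy_q_binomial (a q z : ℂ) (hq : ‖q‖ < 1) (hz : ‖z‖ < 1) :
    HasSum (fun k : ℕ => qp a q k / qp q q k * z ^ k)
      (qpInf (a * z) q / qpInf z q) := by
  have hsum : Summable (fun k : ℕ => qc a q k * z ^ k) := qc_summable a q hq z hz
  set S : ℂ := ∑' k : ℕ, qc a q k * z ^ k with hSdef
  have hznez : ∀ j : ℕ, (1 : ℂ) - z * q ^ j ≠ 0 := by
    intro j
    apply one_sub_ne_zero
    rw [norm_mul, norm_pow]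
    calc ‖z‖ * ‖q‖ ^ j ≤ ‖z‖ * 1 := by
          have := pow_le_one₀ (norm_nonneg q) hq.le (n := j)
          nlinarith [norm_nonneg z]
      _ < 1 := by simpa using hz
  have hne : qpInf z q ≠ 0 := qpInf_ne_zero z q hq hznez
  -- limits of both sides of the iterated identity
  have hL : Tendsto (fun n : ℕ => qp z q n * S) atTop (𝓝 (qpInf z q * S)) :=
    (tendsto_qp z q hq).mul_const S
  have hR : Tendsto (fun n : ℕ => qp (a * z) q n * (∑' k : ℕ, qc a q k * (q ^ n * z) ^ k))
      atTop (𝓝 (qpInf (a * z) q * 1)) :=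
    (tendsto_qp (a * z) q hq).mul (tendsto_tail a q z hq hz)
  have hLR : Tendsto (fun n : ℕ => qp z q n * S) atTop (𝓝 (qpInf (a * z) q * 1)) := by
    refine hR.congr fun n => ?_
    exact (iterEq a q z hq hz n).symm
  have hkey : qpInf z q * S = qpInf (a * z) q * 1 := tendsto_nhds_unique hL hLR
  have hSeq : S = qpInf (a * z) q / qpInf z q := by
    rw [eq_div_iff hne]
    rw [mul_comm] at hkey
    simpa using hkey
  have := hsum.hasSum
  rw [← hSdef, hSeq] at this
  exact this
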